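/- For all z, ζ ∈ ℂ and all integers k ≤ n: 𝒯^{z+ζ}(n,k) = 𝒯^z(n,k) − ζ·Σ_{l=k}^{n−1} 𝒯^{z+ζ}(n,l+1) · (1/t(l)) · P · 𝒯^z(l,k), where P = [[1,0],[0,0]]. -/
import Mathlib


open MeasureTheory Filter
open scoped BigOperators ENNReal

noncomputable section

/-- Single-site transfer matrix at complex energy. -/
def TstC (a : ℂ) (t : ℝ) : Matrix (Fin 2) (Fin 2) ℂ :=
  (1 / (t : ℂ)) • !![a, -(t : ℂ) ^ 2; 1, 0]

/-- Site-wise transfer matrix `𝒯^z(n,k)` for Jacobi data `(t,v)`. -/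
def TS (t v : ℤ → ℝ) (z : ℂ) (n k : ℤ) : Matrix (Fin 2) (Fin 2) ℂ :=
  ((List.range (n - k).toNat).map fun i => TstC ((v (n - 1 - i) : ℂ) - z) (t (n - 1 - i))).prod

/-- Euclidean operator norm of a complex 2×2 matrix. -/
def opNormC (A : Matrix (Fin 2) (Fin 2) ℂ) : ℝ := ‖Matrix.toEuclideanCLM (𝕜 := ℂ) A‖

lemma TS_eq (t v : ℤ → ℝ) (z : ℂ) (n k : ℤ) :
    TS t v z n k =
      ((List.range (n - k).toNat).map
        fun (i : ℕ) => TstC ((v (n - 1 - i) : ℂ) - z) (t (n - 1 - i))).prod := by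
  unfold TS
  congr 1
  generalize List.range (n - k).toNat = L
  induction L with
  | nil => simp
  | cons a L ih => simp_all

lemma TS_self (t v : ℤ → ℝ) (z : ℂ) (k : ℤ) : TS t v z k k = 1 := by
  simp [TS_eq]

lemma TS_succ (t v : ℤ → ℝ) (z : ℂ) {n k : ℤ} (h : k ≤ n) :
    TS t v z (n + 1) k = TstC ((v n : ℂ) - z) (t n) * TS t v z n k := by
  rw [TS_eq, TS_eq]
  have h1 : (n + 1 - k).toNat = (n - k).toNat + 1 := by omega
  rw [h1, List.range_succ_eq_map, List.map_cons, List.prod_cons, List.map_map]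
  congr 1
  · norm_num
  · refine congrArg _ (List.map_congr_left fun i hi => ?_)
    have e : n + 1 - 1 - ((i : ℤ) + 1) = n - 1 - i := by ring
    simp only [Function.comp]
    rw [show ((Nat.succ i : ℕ) : ℤ) = (i : ℤ) + 1 by push_cast; ring, e]

lemma matalg (ζ : ℂ) (A B X S : Matrix (Fin 2) (Fin 2) ℂ) :
    (A - ζ • B) * (X - ζ • S) = A * X - ζ • ((A - ζ • B) * S + B * X) := by
  simp only [mul_sub, sub_mul, mul_smul_comm, smul_mul_assoc, smul_add]
  abel

lemma TstC_sub (a ζ : ℂ) (s : ℝ) :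
    TstC (a - ζ) s = TstC a s - ζ • ((1 / (s : ℂ)) • !![1, 0; 0, 0]) := by
  ext i j
  fin_cases i <;> fin_cases j <;>
    simp [TstC, Matrix.smul_apply, Matrix.sub_apply] <;> ring

/-- Resolvent-type perturbation identity for transfer matrices. -/
theorem stmt12 (t v : ℤ → ℝ) (ht : ∀ n, 0 < t n) (z ζ : ℂ) (k n : ℤ) (hkn : k ≤ n) :
    TS t v (z + ζ) n k =
      TS t v z n k - ζ • ∑ i ∈ Finset.range (n - k).toNat,
        TS t v (z + ζ) n (k + i + 1) *
          ((1 / (t (k + i) : ℂ)) • (!![1, 0; 0, 0] : Matrix (Fin 2) (Fin 2) ℂ)) *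
          TS t v z (k + i) k := by
  obtain ⟨m, rfl⟩ : ∃ m : ℕ, n = k + m := ⟨(n - k).toNat, by omega⟩
  clear hkn
  induction m with
  | zero => simp [TS_self]
  | succ m ih =>
    have hN : (k + (↑(m + 1) : ℤ)) = (k + m) + 1 := by push_cast; ring
    have hkm : k ≤ k + (m : ℤ) := by omega
    have htoNat : (k + (m : ℤ) + 1 - k).toNat = m + 1 := by omega
    have htoNat' : (k + (m : ℤ) - k).toNat = m := by omega
    set B : Matrix (Fin 2) (Fin 2) ℂ :=
      (1 / (t (k + m) : ℂ)) • !![1, 0; 0, 0] with hB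
    set A : Matrix (Fin 2) (Fin 2) ℂ := TstC ((v (k + m) : ℂ) - z) (t (k + m)) with hA0
    have hA : TstC ((v (k + m) : ℂ) - (z + ζ)) (t (k + m)) = A - ζ • B := by
      rw [show (v (k + m) : ℂ) - (z + ζ) = ((v (k + m) : ℂ) - z) - ζ by ring, TstC_sub]
    have hstep : ∀ i ∈ Finset.range m,
        TS t v (z + ζ) (k + (m : ℤ) + 1) (k + (i : ℤ) + 1) *
            ((1 / (t (k + i) : ℂ)) • (!![1, 0; 0, 0] : Matrix (Fin 2) (Fin 2) ℂ)) *
            TS t v z (k + (i : ℤ)) k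
          = (A - ζ • B) * (TS t v (z + ζ) (k + (m : ℤ)) (k + (i : ℤ) + 1) *
              ((1 / (t (k + i) : ℂ)) • (!![1, 0; 0, 0] : Matrix (Fin 2) (Fin 2) ℂ)) *
              TS t v z (k + (i : ℤ)) k) := by
      intro i hi
      simp only [Finset.mem_range] at hi
      rw [TS_succ t v (z + ζ) (show k + (i : ℤ) + 1 ≤ k + (m : ℤ) by omega), hA]
      simp only [mul_assoc]
    rw [hN, TS_succ t v (z + ζ) hkm, TS_succ t v z hkm, hA, ih, htoNat', htoNat,
      Finset.sum_range_succ, Finset.sum_congr rfl hstep, ← Finset.mul_sum,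
      TS_self, one_mul]
    rw [← hA0, ← hB]
    exact matalg ζ A B _ _
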